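/- Let B be an n×k real matrix, δ ∈ (0,1), y̌ ∈ ℝ^k nonzero, ř an ordered selection, w ∈ ℝ^m, and x̌ = S_ř B y̌ + w. Assume that for every y ∈ ℝ^k and every ordered selection r: (1−δ)·d((y,r),(y̌,ř))² ≤ ‖S_r B y − S_ř B y̌‖² ≤ (1+δ)·d((y,r),(y̌,ř))². Let r be an ordered selection, set ν = c(r,ř)/m and ζ = ‖w‖/(√m·‖y̌‖), and let y* be a minimizer of y ↦ ‖S_r B y − x̌‖ over ℝ^k. Then d((y*,r),(y̌,ř))/(√m·‖y̌‖) ≤ √((1+δ)/(1−δ))·√(1−ν²) + 2ζ/√(1−δ). -/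

import Mathlib

/-- Apply the ordered-selection sampling: `(S_r B y) i = ⟨B_{r i}, y⟩`. -/
noncomputable def selApply {n k m : ℕ} (B : Matrix (Fin n) (Fin k) ℝ) (r : Fin m → Fin n)
    (y : EuclideanSpace ℝ (Fin k)) : EuclideanSpace ℝ (Fin m) :=
  WithLp.toLp 2 (fun i => ∑ j, B (r i) j * y j)

/-- Similarity count `c(r,r') = #{i : r i = r' i}`. -/
def simCount {n m : ℕ} (r r' : Fin m → Fin n) : ℕ :=
  (Finset.univ.filter (fun i => r i = r' i)).card

/-- Distance `d((y,r),(y',r')) = √(m‖y‖² + m‖y'‖² − 2 c(r,r') ⟨y,y'⟩)`. -/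
noncomputable def selDist {n k m : ℕ} (y y' : EuclideanSpace ℝ (Fin k))
    (r r' : Fin m → Fin n) : ℝ :=
  Real.sqrt ((m : ℝ) * ‖y‖ ^ 2 + (m : ℝ) * ‖y'‖ ^ 2
    - 2 * (simCount r r' : ℝ) * (inner ℝ y y' : ℝ))

/-- One projection step onto 𝓨: bound on the distance of the least-squares
minimizer to the target (equation (26) in the paper). -/
theorem projection_on_Y_bound {n k m : ℕ} (hm : 0 < m) (hmn : m ≤ n)
    (B : Matrix (Fin n) (Fin k) ℝ) (δ : ℝ) (hδ0 : 0 < δ) (hδ1 : δ < 1)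
    (ychk : EuclideanSpace ℝ (Fin k)) (hychk : ychk ≠ 0)
    (rchk : Fin m → Fin n) (hrchk : StrictMono rchk)
    (w : EuclideanSpace ℝ (Fin m))
    (xchk : EuclideanSpace ℝ (Fin m)) (hxchk : xchk = selApply B rchk ychk + w)
    (hbound : ∀ (y : EuclideanSpace ℝ (Fin k)) (r : Fin m → Fin n), StrictMono r →
      (1 - δ) * (selDist y ychk r rchk) ^ 2
          ≤ ‖selApply B r y - selApply B rchk ychk‖ ^ 2 ∧
      ‖selApply B r y - selApply B rchk ychk‖ ^ 2
          ≤ (1 + δ) * (selDist y ychk r rchk) ^ 2)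
    (r : Fin m → Fin n) (hr : StrictMono r)
    (ν ζ : ℝ) (hν : ν = (simCount r rchk : ℝ) / m)
    (hζ : ζ = ‖w‖ / (Real.sqrt m * ‖ychk‖))
    (ystar : EuclideanSpace ℝ (Fin k))
    (hmin : ∀ y : EuclideanSpace ℝ (Fin k),
      ‖selApply B r ystar - xchk‖ ≤ ‖selApply B r y - xchk‖) :
    selDist ystar ychk r rchk / (Real.sqrt m * ‖ychk‖) ≤
      Real.sqrt ((1 + δ) / (1 - δ)) * Real.sqrt (1 - ν ^ 2)
        + 2 * ζ / Real.sqrt (1 - δ) := by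
  have hmR : (0:ℝ) < m := Nat.cast_pos.mpr hm
  have hy0 : 0 < ‖ychk‖ := norm_pos_iff.mpr hychk
  have hM : 0 < Real.sqrt m * ‖ychk‖ :=
    mul_pos (Real.sqrt_pos.mpr hmR) hy0
  have h1δ : (0:ℝ) < 1 - δ := by linarith
  have hs1δ : 0 < Real.sqrt (1 - δ) := Real.sqrt_pos.mpr h1δ
  -- ν ∈ [0,1]
  have hcard : (simCount r rchk : ℝ) ≤ m := by
    have := Finset.card_filter_le (Finset.univ : Finset (Fin m)) (fun i => r i = rchk i)
    simpa [simCount] using (Nat.cast_le (α := ℝ)).mpr this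
  have hν0 : 0 ≤ ν := by rw [hν]; positivity
  have hν1 : ν ≤ 1 := by rw [hν]; exact (div_le_one hmR).mpr hcard
  have h1ν : 0 ≤ 1 - ν ^ 2 := by nlinarith
  have hc : (simCount r rchk : ℝ) = ν * m := by
    rw [hν]; field_simp
  set D := selDist ystar ychk r rchk with hD
  have hD0 : 0 ≤ D := Real.sqrt_nonneg _
  -- lower bound: sqrt(1-δ) * D ≤ ‖S_r y* - S_ř y̌‖
  have hlow : Real.sqrt (1 - δ) * D ≤ ‖selApply B r ystar - selApply B rchk ychk‖ := by
    have h := (hbound ystar r hr).1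
    have := Real.sqrt_le_sqrt h
    rwa [Real.sqrt_mul h1δ.le, Real.sqrt_sq hD0, Real.sqrt_sq (norm_nonneg _)] at this
  -- computing selDist (ν • ychk) ychk r rchk
  have hE : selDist (ν • ychk) ychk r rchk
      = Real.sqrt m * ‖ychk‖ * Real.sqrt (1 - ν ^ 2) := by
    have hinner : (inner ℝ (ν • ychk) ychk : ℝ) = ν * ‖ychk‖ ^ 2 := by
      rw [real_inner_smul_left, real_inner_self_eq_norm_sq]
    have hnorm : ‖ν • ychk‖ ^ 2 = ν ^ 2 * ‖ychk‖ ^ 2 := by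
      rw [norm_smul, mul_pow, Real.norm_eq_abs, sq_abs]
    rw [selDist, hinner, hnorm, hc]
    have : (m:ℝ) * (ν ^ 2 * ‖ychk‖ ^ 2) + (m:ℝ) * ‖ychk‖ ^ 2
        - 2 * (ν * m) * (ν * ‖ychk‖ ^ 2) = ((m:ℝ) * ‖ychk‖ ^ 2) * (1 - ν ^ 2) := by ring
    rw [this, Real.sqrt_mul (by positivity), Real.sqrt_mul hmR.le, Real.sqrt_sq hy0.le]
  -- upper bound chain
  have hup : ‖selApply B r (ν • ychk) - selApply B rchk ychk‖
      ≤ Real.sqrt (1 + δ) * (Real.sqrt m * ‖ychk‖ * Real.sqrt (1 - ν ^ 2)) := by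
    have h := (hbound (ν • ychk) r hr).2
    have h' := Real.sqrt_le_sqrt h
    rwa [Real.sqrt_sq (norm_nonneg _), Real.sqrt_mul (by linarith : (0:ℝ) ≤ 1 + δ),
      Real.sqrt_sq (show (0:ℝ) ≤ selDist (ν • ychk) ychk r rchk from Real.sqrt_nonneg _), hE] at h'
  have key : Real.sqrt (1 - δ) * D
      ≤ Real.sqrt (1 + δ) * (Real.sqrt m * ‖ychk‖ * Real.sqrt (1 - ν ^ 2)) + 2 * ‖w‖ := by
    have h1 : ‖selApply B r ystar - selApply B rchk ychk‖
        ≤ ‖selApply B r ystar - xchk‖ + ‖w‖ := by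
      have : selApply B r ystar - selApply B rchk ychk
          = (selApply B r ystar - xchk) + w := by rw [hxchk]; abel
      rw [this]; exact norm_add_le _ _
    have h2 : ‖selApply B r (ν • ychk) - xchk‖
        ≤ ‖selApply B r (ν • ychk) - selApply B rchk ychk‖ + ‖w‖ := by
      have : selApply B r (ν • ychk) - xchk
          = (selApply B r (ν • ychk) - selApply B rchk ychk) + (-w) := by
        rw [hxchk]; abel
      rw [this]
      calc ‖_ + (-w)‖ ≤ ‖selApply B r (ν • ychk) - selApply B rchk ychk‖ + ‖-w‖ :=
            norm_add_le _ _
        _ = _ := by rw [norm_neg]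
    have h3 := hmin (ν • ychk)
    linarith [hlow]
  -- final algebra
  rw [hζ, div_le_iff₀ hM, Real.sqrt_div (by linarith : (0:ℝ) ≤ 1 + δ)]
  rw [← mul_le_mul_iff_right₀ hs1δ]
  calc Real.sqrt (1 - δ) * D
      ≤ Real.sqrt (1 + δ) * (Real.sqrt m * ‖ychk‖ * Real.sqrt (1 - ν ^ 2)) + 2 * ‖w‖ := key
    _ = Real.sqrt (1 - δ) * ((Real.sqrt (1 + δ) / Real.sqrt (1 - δ) * Real.sqrt (1 - ν ^ 2)
          + 2 * (‖w‖ / (Real.sqrt m * ‖ychk‖)) / Real.sqrt (1 - δ))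
          * (Real.sqrt m * ‖ychk‖)) := by
        field_simp
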